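/- For all integers k ≥ 1 and j ≥ 1, the generalized transformation coefficients satisfy the harmonic-number-based recurrence k · S(k, j) = Σ_{m=1}^{k} H_j^{(m)} · S(k−m, j). -/

import Mathlib

/-- The generalized transformation coefficient
`S k j = (1/j!) · Σ_{m=1}^{j} C(j,m) · (−1)^{j−m} · m^{−k}`. -/
noncomputable def S (k j : ℕ) : ℝ :=
  (1 / (Nat.factorial j : ℝ)) *
    ∑ m ∈ Finset.Icc 1 j, (Nat.choose j m : ℝ) * (-1 : ℝ) ^ (j - m) / (m : ℝ) ^ k

/-- The `r`-order harmonic number `H r n = Σ_{m=1}^{n} 1/m^r`. -/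
noncomputable def H (r n : ℕ) : ℝ :=
  ∑ m ∈ Finset.Icc 1 n, 1 / (m : ℝ) ^ r

/-- Complete homogeneous symmetric function `h_k(1, 1/2, ..., 1/j)`. -/
noncomputable def hc : ℕ → ℕ → ℝ
  | 0, _ => 1
  | _+1, 0 => 0
  | k+1, j+1 => hc (k+1) j + (1/(j+1 : ℝ)) * hc k (j+1)
  termination_by k j => (k, j)

@[simp] lemma hc_zero (j : ℕ) : hc 0 j = 1 := by cases j <;> rw [hc]

@[simp] lemma hc_succ_zero (k : ℕ) : hc (k+1) 0 = 0 := by rw [hc]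

lemma hc_succ_succ (k j : ℕ) :
    hc (k+1) (j+1) = hc (k+1) j + (1/(j+1 : ℝ)) * hc k (j+1) := by
  rw [hc]

lemma hc_col (k j : ℕ) :
    hc k (j+1) = ∑ i ∈ Finset.range (k+1), (1/(j+1:ℝ))^i * hc (k-i) j := by
  induction k with
  | zero => simp
  | succ k ih =>
      rw [hc_succ_succ, ih, Finset.sum_range_succ' _ (k+1)]
      simp only [Nat.succ_sub_succ_eq_sub, pow_zero, one_mul, Nat.sub_zero]
      rw [Finset.mul_sum, add_comm]
      congr 1
      apply Finset.sum_congr rfl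
      intro i _
      rw [pow_succ]
      ring

lemma H_succ (m n : ℕ) : H m (n+1) = H m n + (1/(n+1:ℝ))^m := by
  unfold H
  rw [Finset.sum_Icc_succ_top (by omega : 1 ≤ n+1)]
  push_cast
  rw [div_pow, one_pow]

lemma newton (j : ℕ) : ∀ k : ℕ, (k:ℝ) * hc k j = ∑ m ∈ Finset.Icc 1 k, H m j * hc (k-m) j := by
  induction j with
  | zero =>
      intro k
      cases k with
      | zero => simp
      | succ k => simp [H]
  | succ j IHj =>
      intro k
      induction k with
      | zero => simp
      | succ k IHk =>
          have e3 : (1/(j+1:ℝ)) * hc k (j+1) =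
              ∑ m ∈ Finset.Icc 1 (k+1), (1/(j+1:ℝ))^m * hc (k+1-m) j := by
            rw [hc_col k j, Finset.mul_sum,
              show Finset.Icc 1 (k+1) = Finset.Ico 1 (k+2) from (Finset.Ico_add_one_right_eq_Icc 1 (k+1)).symm,
              Finset.sum_Ico_eq_sum_range]
            simp only [show k+2-1 = k+1 from rfl]
            apply Finset.sum_congr rfl
            intro i hi
            rw [show k+1-(1+i) = k-i by omega, pow_add, pow_one]
            ring
          have e3' : (1/(j+1:ℝ)) * hc k (j+1) =
              (∑ m ∈ Finset.Icc 1 k, (1/(j+1:ℝ))^m * hc (k+1-m) j) + (1/(j+1:ℝ))^(k+1) := by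
            rw [e3, Finset.sum_Icc_succ_top (Nat.le_add_left 1 k)]
            simp
          have f1 : ((k:ℝ)+1) * hc (k+1) j =
              (∑ m ∈ Finset.Icc 1 k, H m j * hc (k+1-m) j) + H (k+1) j := by
            have := IHj (k+1)
            push_cast at this
            rw [this, Finset.sum_Icc_succ_top (Nat.le_add_left 1 k)]
            simp
          have f2 : (k:ℝ) * hc k (j+1) =
              (∑ m ∈ Finset.Icc 1 k, H m j * hc (k-m) (j+1))
              + ∑ m ∈ Finset.Icc 1 k, (1/(j+1:ℝ))^m * hc (k-m) (j+1) := by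
            rw [IHk, ← Finset.sum_add_distrib]
            apply Finset.sum_congr rfl
            intro m hm
            rw [H_succ]
            ring
          have hRHS : (∑ m ∈ Finset.Icc 1 (k+1), H m (j+1) * hc (k+1-m) (j+1)) =
              (∑ m ∈ Finset.Icc 1 k, H m j * hc (k+1-m) j)
              + (1/(j+1:ℝ)) * (∑ m ∈ Finset.Icc 1 k, H m j * hc (k-m) (j+1))
              + (∑ m ∈ Finset.Icc 1 k, (1/(j+1:ℝ))^m * hc (k+1-m) j)
              + (1/(j+1:ℝ)) * (∑ m ∈ Finset.Icc 1 k, (1/(j+1:ℝ))^m * hc (k-m) (j+1))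
              + (H (k+1) j + (1/(j+1:ℝ))^(k+1)) := by
            rw [Finset.sum_Icc_succ_top (Nat.le_add_left 1 k), Finset.mul_sum, Finset.mul_sum,
              ← Finset.sum_add_distrib, ← Finset.sum_add_distrib, ← Finset.sum_add_distrib]
            congr 1
            · apply Finset.sum_congr rfl
              intro m hm
              rw [Finset.mem_Icc] at hm
              rw [H_succ, show k+1-m = (k-m)+1 by omega, hc_succ_succ]
              ring
            · rw [H_succ]
              simp
          rw [hc_succ_succ, hRHS]
          push_cast
          linear_combination f1 + (1/(j+1:ℝ)) * f2 + e3'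

lemma hc_one (k : ℕ) : hc k 1 = 1 := by
  induction k with
  | zero => simp
  | succ k ih => rw [hc_succ_succ]; simp [ih]

lemma alt_sum (n : ℕ) (hn : 1 ≤ n) :
    ∑ m ∈ Finset.Icc 1 n, (-1:ℝ)^(m-1) * (n.choose m : ℝ) = 1 := by
  have h0 : (∑ i ∈ Finset.range (n+1), (-1:ℤ)^i * (n.choose i : ℤ)) = 0 := by
    rw [Int.alternating_sum_range_choose, if_neg (by omega)]
  have h0' : (∑ i ∈ Finset.range (n+1), (-1:ℝ)^i * (n.choose i : ℝ)) = 0 := by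
    exact_mod_cast congrArg (Int.cast : ℤ → ℝ) h0
  rw [Finset.sum_range_succ'] at h0'
  simp only [pow_zero, one_mul, Nat.choose_zero_right, Nat.cast_one] at h0'
  have h1 : ∑ m ∈ Finset.Icc 1 n, (-1:ℝ)^(m-1) * (n.choose m : ℝ)
      = ∑ i ∈ Finset.range n, (-1:ℝ)^i * (n.choose (i+1) : ℝ) := by
    rw [← Finset.Ico_add_one_right_eq_Icc, Finset.sum_Ico_eq_sum_range]
    apply Finset.sum_congr (by rw [Nat.add_sub_cancel])
    intro i _
    rw [show 1+i-1 = i by omega, show 1+i = i+1 by omega]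
  have h2 : ∑ i ∈ Finset.range n, (-1:ℝ)^(i+1) * (n.choose (i+1) : ℝ)
      = -∑ i ∈ Finset.range n, (-1:ℝ)^i * (n.choose (i+1) : ℝ) := by
    rw [← Finset.sum_neg_distrib]
    apply Finset.sum_congr rfl
    intro i _
    rw [pow_succ]
    ring
  rw [h1]
  rw [h2] at h0'
  linarith

lemma hc_formula : ∀ j, 1 ≤ j → ∀ k,
    hc k j = ∑ m ∈ Finset.Icc 1 j, (-1:ℝ)^(m-1) * ((j.choose m : ℕ) : ℝ) / (m:ℝ)^k := by
  intro j
  induction j with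
  | zero => omega
  | succ j IHj =>
      intro _ k
      rcases Nat.eq_zero_or_pos j with rfl | hj
      · rw [hc_one]
        rw [show (0:ℕ)+1 = 1 from rfl, Finset.Icc_self, Finset.sum_singleton]
        norm_num
      · induction k with
        | zero =>
            rw [hc_zero]
            simp only [pow_zero, div_one]
            rw [alt_sum (j+1) (by omega)]
        | succ k IHk =>
            rw [hc_succ_succ, IHj hj (k+1), IHk]
            have ext : (∑ m ∈ Finset.Icc 1 j, (-1:ℝ)^(m-1)*((j.choose m : ℕ):ℝ)/(m:ℝ)^(k+1))
                = ∑ m ∈ Finset.Icc 1 (j+1), (-1:ℝ)^(m-1)*((j.choose m : ℕ):ℝ)/(m:ℝ)^(k+1) := by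
              rw [Finset.sum_Icc_succ_top (Nat.le_add_left 1 j)]
              simp [Nat.choose_succ_self]
            rw [ext, Finset.mul_sum, ← Finset.sum_add_distrib]
            apply Finset.sum_congr rfl
            intro m hm
            rw [Finset.mem_Icc] at hm
            have hm0 : (m:ℝ) ≠ 0 := by
              have : 0 < m := hm.1
              positivity
            have hj0 : (j:ℝ)+1 ≠ 0 := by positivity
            have hpn := Nat.choose_succ_succ j (m-1)
            simp only [Nat.succ_eq_add_one] at hpn
            rw [show (m-1)+1 = m by omega] at hpn
            have hp : ((Nat.choose (j+1) m : ℕ) : ℝ)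
                = ((j.choose (m-1) : ℕ) : ℝ) + ((j.choose m : ℕ) : ℝ) := by
              exact_mod_cast hpn
            have hs : ((j:ℝ)+1) * ((j.choose (m-1) : ℕ) : ℝ)
                = ((Nat.choose (j+1) m : ℕ) : ℝ) * (m:ℝ) := by
              have h := Nat.add_one_mul_choose_eq j (m-1)
              rw [show (m-1)+1 = m by omega] at h
              exact_mod_cast h
            have key2 : (1/((j:ℝ)+1)) * ((-1:ℝ)^(m-1) * ((Nat.choose (j+1) m : ℕ):ℝ) / (m:ℝ)^k)
                = (-1:ℝ)^(m-1) * ((j.choose (m-1) : ℕ):ℝ) / (m:ℝ)^(k+1) := by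
              rw [pow_succ]
              have hmk : (m:ℝ)^k ≠ 0 := pow_ne_zero _ hm0
              have hcj : ((j.choose (m-1) : ℕ) : ℝ) = ((Nat.choose (j+1) m : ℕ) : ℝ) * (m:ℝ) / ((j:ℝ)+1) := by
                rw [eq_div_iff hj0, ← hs]; ring
              rw [hcj]
              field_simp
            rw [key2, hp]
            ring

lemma S_eq (k j : ℕ) (hj : 1 ≤ j) :
    S k j = ((-1:ℝ)^(j-1) / (Nat.factorial j : ℝ)) * hc k j := by
  rw [hc_formula j hj k]
  unfold S
  rw [Finset.mul_sum, Finset.mul_sum]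
  apply Finset.sum_congr rfl
  intro m hm
  rw [Finset.mem_Icc] at hm
  have hsign : (-1:ℝ)^(j-m) = (-1:ℝ)^(j-1) * (-1:ℝ)^(m-1) := by
    rw [show j-1 = (j-m)+(m-1) by omega, pow_add, mul_assoc, ← pow_add,
      show (m-1)+(m-1) = 2*(m-1) by ring, pow_mul]
    norm_num
  rw [hsign]
  ring


theorem stmt_6 (k j : ℕ) (hk : 1 ≤ k) (hj : 1 ≤ j) :
    (k : ℝ) * S k j = ∑ m ∈ Finset.Icc 1 k, H m j * S (k - m) j := by
  have hS : ∀ k', S k' j = ((-1:ℝ)^(j-1) / (Nat.factorial j : ℝ)) * hc k' j :=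
    fun k' => S_eq k' j hj
  rw [hS]
  calc (k:ℝ) * (((-1:ℝ)^(j-1) / (Nat.factorial j : ℝ)) * hc k j)
      = ((-1:ℝ)^(j-1) / (Nat.factorial j : ℝ)) * ((k:ℝ) * hc k j) := by ring
    _ = ((-1:ℝ)^(j-1) / (Nat.factorial j : ℝ)) *
          ∑ m ∈ Finset.Icc 1 k, H m j * hc (k-m) j := by rw [newton j k]
    _ = ∑ m ∈ Finset.Icc 1 k, H m j * S (k - m) j := by
        rw [Finset.mul_sum]
        apply Finset.sum_congr rfl
        intro m _
        rw [hS]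
        ring
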